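/- A sequence (X_n) of L²_loc-valued stochastic processes is tight with respect to the L²_w-topology if and only if, for each T > 0, the sequence of real random variables (|X_n|_T)_{n≥1} is tight. -/

import Mathlib

open MeasureTheory Set Filter Topology ProbabilityTheory
open scoped ENNReal NNReal

noncomputable section

namespace RV

/-! ### The space `L²_loc` and the weak dual (`L²_w`) topology -/

/-- Membership in `L²_loc`: measurable, locally square integrable on `(0,T]` for all `T > 0`. -/
def LlocMem (f : ℝ → ℝ) : Prop :=
  Measurable f ∧ ∀ T : ℝ, 0 < T → IntegrableOn (fun t => (f t) ^ 2) (Ioc 0 T) volume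

/-- The space `L²_loc`. -/
def Lloc : Type := {f : ℝ → ℝ // LlocMem f}

lemma zero_mem_Lloc : LlocMem (fun _ => (0 : ℝ)) := by
  refine ⟨measurable_const, fun T hT => ?_⟩
  have h : (fun t : ℝ => ((fun _ : ℝ => (0 : ℝ)) t) ^ 2) = fun _ : ℝ => (0 : ℝ) := by
    funext t; norm_num
  rw [h]
  exact (integrableOn_const_iff).mpr (Or.inr measure_Ioc_lt_top)

open Classical in
/-- Interpret a raw function as an element of `L²_loc` (junk value if not a member). -/
def mkLloc (f : ℝ → ℝ) : Lloc := if h : LlocMem f then ⟨f, h⟩ else ⟨fun _ => 0, zero_mem_Lloc⟩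

/-- The norm `|x|_T = (∫_0^T x(t)² dt)^{1/2}`. -/
def locNorm (T : ℝ) (f : ℝ → ℝ) : ℝ := Real.sqrt (∫ t in Ioc (0 : ℝ) T, (f t) ^ 2)

/-- Test pairs `(T, f)` with `T > 0` and `f ∈ L²[0,T]`. -/
def TestIdx : Type :=
  {p : ℝ × (ℝ → ℝ) // 0 < p.1 ∧ Measurable p.2 ∧
    IntegrableOn (fun t => (p.2 t) ^ 2) (Ioc 0 p.1) volume}

/-- The pairing `x ↦ ∫_0^T x(t) f(t) dt`. -/
def pairing (p : TestIdx) (x : Lloc) : ℝ := ∫ t in Ioc (0 : ℝ) p.1.1, x.1 t * p.1.2 t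

/-- The `L²_w`-topology on `L²_loc`: the initial topology for all the pairings. -/
instance : TopologicalSpace Lloc :=
  ⨅ p : TestIdx, TopologicalSpace.induced (pairing p) inferInstance

instance : MeasurableSpace Lloc := borel Lloc

/-! ### Tightness and convergence in distribution -/

/-- Tightness of the laws of a sequence of random elements of a topological space. -/
def TightLaws {Ω : Type*} [MeasurableSpace Ω] {α : Type*} [TopologicalSpace α]
    (P : Measure Ω) (X : ℕ → Ω → α) : Prop :=
  ∀ ε : ℝ≥0∞, 0 < ε → ∃ K : Set α, IsCompact K ∧ ∀ n, P ((X n) ⁻¹' Kᶜ) ≤ ε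

/-- Tightness of a sequence of real random variables. -/
def TightReal {Ω : Type*} [MeasurableSpace Ω] (P : Measure Ω) (g : ℕ → Ω → ℝ) : Prop :=
  ∀ ε : ℝ≥0∞, 0 < ε → ∃ M : ℝ, ∀ n, P {ω | M < |g n ω|} ≤ ε

/-- Convergence in distribution (weak convergence of laws) of random elements of a
topological space, the limit being allowed to live on a different probability space. -/
def ConvInDist {Ω Ω' α : Type*} [MeasurableSpace Ω] [MeasurableSpace Ω'] [TopologicalSpace α]
    (P : Measure Ω) (P' : Measure Ω') (X : ℕ → Ω → α) (Y : Ω' → α) : Prop :=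
  ∀ F : BoundedContinuousFunction α ℝ,
    Tendsto (fun n => ∫ ω, F (X n ω) ∂P) atTop (𝓝 (∫ ω, F (Y ω) ∂P'))

/-- Convergence of finite dimensional distributions, for times in `S`. -/
def FddConvOn {Ω Ω' β : Type*} [MeasurableSpace Ω] [MeasurableSpace Ω'] [TopologicalSpace β]
    (S : Set ℝ) (P : Measure Ω) (P' : Measure Ω')
    (X : ℕ → Ω → ℝ → β) (Y : Ω' → ℝ → β) : Prop :=
  ∀ (m : ℕ) (ts : Fin m → ℝ), (∀ i, ts i ∈ S) →
    ConvInDist P P' (fun n ω => fun i => X n ω (ts i)) (fun ω => fun i => Y ω (ts i))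

/-- Equality of all finite dimensional distributions (over nonnegative times). -/
def FddEq {Ω Ω' β : Type*} [MeasurableSpace Ω] [MeasurableSpace Ω'] [MeasurableSpace β]
    (P : Measure Ω) (P' : Measure Ω') (X : Ω → ℝ → β) (Y : Ω' → ℝ → β) : Prop :=
  ∀ (m : ℕ) (ts : Fin m → ℝ), (∀ i, 0 ≤ ts i) →
    Measure.map (fun ω => fun i => X ω (ts i)) P
      = Measure.map (fun ω => fun i => Y ω (ts i)) P'

/-- The integral operator `I(x)(t) = ∫_0^t x(s) ds`. -/
def Itg (x : ℝ → ℝ) (t : ℝ) : ℝ := ∫ s in Ioc (0 : ℝ) t, x s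

/-! ### Càdlàg paths, monotone paths and inverses -/

/-- `f` is càdlàg on `[0,∞)`: right-continuous everywhere on `[0,∞)`,
with left limits at every `t > 0`. -/
def IsCadlag {E : Type*} [TopologicalSpace E] (f : ℝ → E) : Prop :=
  (∀ t : ℝ, 0 ≤ t → ContinuousWithinAt f (Ici t) t) ∧
  (∀ t : ℝ, 0 < t → ∃ L : E, Tendsto f (𝓝[<] t) (𝓝 L))

/-- The right-continuous generalized inverse `τ(s) = inf{t ≥ 0 : y(t) > s}`. -/
def rinv (y : ℝ → ℝ) (s : ℝ) : ℝ := sInf {t : ℝ | 0 ≤ t ∧ s < y t}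

/-- The set `D_↑`: càdlàg, non-negative, non-decreasing, tending to infinity. -/
def DUp (y : ℝ → ℝ) : Prop :=
  IsCadlag y ∧ (∀ t : ℝ, 0 ≤ t → 0 ≤ y t) ∧ MonotoneOn y (Ici 0) ∧ Tendsto y atTop atTop

/-! ### The moduli `𝕄`, `𝕁`, `ℂ` and the associated tightness/weak convergence notions -/

/-- `𝕄(a,b,c)`: distance from `b` to the segment `[a,c]`. -/
def MM {E : Type*} [SeminormedAddCommGroup E] [NormedSpace ℝ E] (a b c : E) : ℝ :=
  Metric.infDist b (segment ℝ a c)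

/-- `𝕁(a,b,c) = min(‖b-a‖, ‖b-c‖)`. -/
def JJ {E : Type*} [SeminormedAddCommGroup E] (a b c : E) : ℝ := min ‖b - a‖ ‖b - c‖

/-- `ℂ(a,b,c) = ‖c-a‖`. -/
def CC {E : Type*} [SeminormedAddCommGroup E] (a b c : E) : ℝ := ‖c - a‖

/-- The oscillation modulus `ω_H(x, δ, T)` built from a functional `H` on triples. -/
def osc {E : Type*} (H : E → E → E → ℝ) (x : ℝ → E) (δ T : ℝ) : ℝ :=
  sSup {r : ℝ | ∃ t1 t2 t3 : ℝ, 0 ≤ t1 ∧ t1 < t2 ∧ t2 < t3 ∧ t3 ≤ T ∧ t3 - t1 < δ ∧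
    r = H (x t1) (x t2) (x t3)}

/-- The modulus condition in `H₁`-tightness:
`lim_{δ→0⁺} limsup_n P(ω_H(X_n,δ,T) > ε) = 0` for all `ε, T > 0`. -/
def TightMod {Ω E : Type*} [MeasurableSpace Ω] (H : E → E → E → ℝ)
    (P : Measure Ω) (X : ℕ → Ω → ℝ → E) : Prop :=
  ∀ ε T : ℝ, 0 < ε → 0 < T →
    Tendsto (fun δ : ℝ => limsup (fun n => P {ω | ε < osc H (X n ω) δ T}) atTop)
      (𝓝[>] (0 : ℝ)) (𝓝 (0 : ℝ≥0∞))

/-- Tightness of the marginals over a dense set of times containing `0`. -/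
def TightMarginals {Ω E : Type*} [MeasurableSpace Ω] [TopologicalSpace E]
    (P : Measure Ω) (X : ℕ → Ω → ℝ → E) : Prop :=
  ∃ S : Set ℝ, S ⊆ Ici 0 ∧ (0 : ℝ) ∈ S ∧ Ici (0 : ℝ) ⊆ closure S ∧
    ∀ t ∈ S, ∀ ε : ℝ≥0∞, 0 < ε → ∃ K : Set E, IsCompact K ∧ ∀ n, P {ω | X n ω t ∉ K} ≤ ε

/-- `H₁`-tightness of a sequence of `D`-valued processes. -/
def TightH {Ω E : Type*} [MeasurableSpace Ω] [TopologicalSpace E] (H : E → E → E → ℝ)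
    (P : Measure Ω) (X : ℕ → Ω → ℝ → E) : Prop :=
  TightMarginals P X ∧ TightMod H P X

/-- Weak convergence in the `H₁`-topology: `H₁`-tightness plus convergence of the
finite dimensional distributions over a dense set of times containing `0`. -/
def WeakH {Ω Ω' E : Type*} [MeasurableSpace Ω] [MeasurableSpace Ω'] [TopologicalSpace E]
    (H : E → E → E → ℝ) (P : Measure Ω) (P' : Measure Ω')
    (X : ℕ → Ω → ℝ → E) (Y : Ω' → ℝ → E) : Prop :=
  TightH H P X ∧ ∃ S : Set ℝ, S ⊆ Ici 0 ∧ (0 : ℝ) ∈ S ∧ Ici (0 : ℝ) ⊆ closure S ∧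
    FddConvOn S P P' X Y

/-- `M₁`-convergence of deterministic càdlàg functions: pointwise convergence on a dense
set of times containing `0`, plus the vanishing `𝕄`-modulus condition. -/
def M1ConvDet {E : Type*} [SeminormedAddCommGroup E] [NormedSpace ℝ E]
    (x : ℕ → ℝ → E) (y : ℝ → E) : Prop :=
  (∃ S : Set ℝ, S ⊆ Ici 0 ∧ (0 : ℝ) ∈ S ∧ Ici (0 : ℝ) ⊆ closure S ∧
      ∀ t ∈ S, Tendsto (fun n => x n t) atTop (𝓝 (y t))) ∧
  ∀ T : ℝ, 0 < T →
    Tendsto (fun δ : ℝ => limsup (fun n => osc MM (x n) δ T) atTop) (𝓝[>] (0 : ℝ)) (𝓝 (0 : ℝ))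

/-! ### Martingales, compensators, Brownian motion, Lévy processes -/

/-- A martingale on the nonnegative time axis. -/
def MartingaleNN {Ω : Type*} {m0 : MeasurableSpace Ω} (ℱ : Filtration ℝ m0)
    (P : Measure Ω) (M : ℝ → Ω → ℝ) : Prop :=
  (∀ t : ℝ, 0 ≤ t → Measurable[ℱ t] (M t)) ∧
  (∀ t : ℝ, 0 ≤ t → Integrable (M t) P) ∧
  (∀ s t : ℝ, 0 ≤ s → s ≤ t → P[M t|ℱ s] =ᵐ[P] M s)

/-- The predictable σ-algebra on `ℝ × Ω` associated with a filtration. -/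
def predictableSigma {Ω : Type*} (m0 : MeasurableSpace Ω) (ℱ : Filtration ℝ m0) :
    MeasurableSpace (ℝ × Ω) :=
  MeasurableSpace.generateFrom
    ({S | ∃ s t : ℝ, ∃ A : Set Ω, 0 ≤ s ∧ s < t ∧ MeasurableSet[ℱ s] A ∧ S = Ioc s t ×ˢ A} ∪
     {S | ∃ A : Set Ω, MeasurableSet[ℱ 0] A ∧ S = ({0} : Set ℝ) ×ˢ A})

/-- `A = ⟨M⟩` is the predictable compensator (predictable quadratic variation) of the
square integrable martingale `M`: a predictable, non-decreasing càdlàg process vanishing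
at `0` such that `M² - A` is a martingale. -/
def IsCompensator {Ω : Type*} {m0 : MeasurableSpace Ω} (ℱ : Filtration ℝ m0)
    (P : Measure Ω) (M A : ℝ → Ω → ℝ) : Prop :=
  (∀ ω, A 0 ω = 0) ∧
  (∀ ω, MonotoneOn (fun t => A t ω) (Ici 0)) ∧
  (∀ ω, IsCadlag (fun t => A t ω)) ∧
  (@Measurable (ℝ × Ω) ℝ (predictableSigma m0 ℱ) _ (fun p => A p.1 p.2)) ∧
  MartingaleNN ℱ P (fun t ω => (M t ω) ^ 2 - A t ω)

/-- `Q = [M]` is the quadratic variation of the square integrable martingale `M`: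
an adapted non-decreasing càdlàg process vanishing at `0` such that `M² - Q` is a
martingale and whose jumps are the squared jumps of `M`. -/
def IsQuadVar {Ω : Type*} {m0 : MeasurableSpace Ω} (ℱ : Filtration ℝ m0)
    (P : Measure Ω) (M Q : ℝ → Ω → ℝ) : Prop :=
  (∀ ω, Q 0 ω = 0) ∧
  (∀ ω, MonotoneOn (fun t => Q t ω) (Ici 0)) ∧
  (∀ ω, IsCadlag (fun t => Q t ω)) ∧
  (∀ t : ℝ, 0 ≤ t → Measurable[ℱ t] (Q t)) ∧
  MartingaleNN ℱ P (fun t ω => (M t ω) ^ 2 - Q t ω) ∧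
  (∀ ω, ∀ t : ℝ, 0 < t →
    Q t ω - Function.leftLim (fun s => Q s ω) t
      = (M t ω - Function.leftLim (fun s => M s ω) t) ^ 2)

/-- A standard Brownian motion (on `[0,∞)`). -/
structure IsBrownian {Ω : Type*} [MeasurableSpace Ω] (P : Measure Ω) (W : Ω → ℝ → ℝ) :
    Prop where
  init : ∀ ω, W ω 0 = 0
  cont : ∀ ω, ContinuousOn (W ω) (Ici 0)
  meas : ∀ t : ℝ, Measurable (fun ω => W ω t)
  incr_law : ∀ s t : ℝ, 0 ≤ s → s ≤ t →
    Measure.map (fun ω => W ω t - W ω s) P = gaussianReal 0 (Real.toNNReal (t - s))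
  indep_incr : ∀ (m : ℕ) (ts : Fin (m + 1) → ℝ), (∀ i, 0 ≤ ts i) → Monotone ts →
    iIndepFun
      (fun i : Fin m => fun ω => W ω (ts i.succ) - W ω (ts i.castSucc)) P

/-- A Brownian motion with respect to a filtration `𝔽`. -/
structure IsFBrownian {Ω : Type*} [mΩ : MeasurableSpace Ω] (P : Measure Ω)
    (ℱ : Filtration ℝ mΩ) (W : Ω → ℝ → ℝ) : Prop extends IsBrownian P W where
  adapted : ∀ t : ℝ, 0 ≤ t → Measurable[ℱ t] (fun ω => W ω t)
  indep_past : ∀ s t : ℝ, 0 ≤ s → s ≤ t →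
    Indep (MeasurableSpace.comap (fun ω => W ω t - W ω s) (borel ℝ)) (ℱ s) P

/-- An inhomogeneous Lévy process: càdlàg, adapted, starting at `0`, with increments
independent of the past (hence with deterministic characteristics) and without fixed
times of discontinuity. -/
structure IsInhomLevy {Ω : Type*} [mΩ : MeasurableSpace Ω] (P : Measure Ω)
    (ℱ : Filtration ℝ mΩ) (A : Ω → ℝ → ℝ) : Prop where
  init : ∀ ω, A ω 0 = 0
  cadlag : ∀ ω, IsCadlag (A ω)
  adapted : ∀ t : ℝ, 0 ≤ t → Measurable[ℱ t] (fun ω => A ω t)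
  indep_incr : ∀ s t : ℝ, 0 ≤ s → s ≤ t →
    Indep (MeasurableSpace.comap (fun ω => A ω t - A ω s) (borel ℝ)) (ℱ s) P
  no_fixed_disc : ∀ t : ℝ, 0 < t → ∀ᵐ ω ∂P, Tendsto (A ω) (𝓝[<] t) (𝓝 (A ω t))


/-- A packaged probability space, used to state existential conclusions
("there exists a probability space carrying ..."). -/
structure ProbPack where
  carrier : Type
  inst : MeasurableSpace carrier
  P : @Measure carrier inst
  isProb : @IsProbabilityMeasure carrier inst P

attribute [instance] ProbPack.inst ProbPack.isProb

end RV

namespace RV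

section Aux

/-- Membership in `L²` of the restricted measure. -/
lemma memL2_of {f : ℝ → ℝ} (hf : Measurable f) {T : ℝ}
    (h : IntegrableOn (fun t => f t ^ 2) (Ioc 0 T) volume) :
    MemLp f 2 (volume.restrict (Ioc 0 T)) :=
  (memLp_two_iff_integrable_sq hf.aestronglyMeasurable).2 h

lemma Lloc.memL2 (x : Lloc) {T : ℝ} (hT : 0 < T) :
    MemLp x.1 2 (volume.restrict (Ioc 0 T)) :=
  memL2_of x.2.1 (x.2.2 T hT)

lemma TestIdx.memL2 (p : TestIdx) :
    MemLp p.1.2 2 (volume.restrict (Ioc 0 p.1.1)) :=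
  memL2_of p.2.2.1 p.2.2.2

lemma real_inner_mul (a b : ℝ) : (inner ℝ a b) = a * b := by
  simp [RCLike.inner_apply, mul_comm]

lemma integrable_mul_L2 {μ : Measure ℝ} {u v : ℝ → ℝ}
    (hu : MemLp u 2 μ) (hv : MemLp v 2 μ) :
    Integrable (fun t => u t * v t) μ := by
  have h := L2.integrable_inner (𝕜 := ℝ) (hu.toLp u) (hv.toLp v)
  refine h.congr ?_
  filter_upwards [hu.coeFn_toLp, hv.coeFn_toLp] with t h1 h2
  rw [h1, h2, real_inner_mul]

lemma inner_toLp_eq {T : ℝ} {u v : ℝ → ℝ}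
    (hu : MemLp u 2 (volume.restrict (Ioc 0 T)))
    (hv : MemLp v 2 (volume.restrict (Ioc 0 T))) :
    (inner ℝ (hu.toLp u) (hv.toLp v)) = ∫ t in Ioc (0:ℝ) T, u t * v t := by
  rw [L2.inner_def]
  refine integral_congr_ae ?_
  filter_upwards [hu.coeFn_toLp, hv.coeFn_toLp] with t h1 h2
  rw [h1, h2, real_inner_mul]

lemma norm_toLp_eq {T : ℝ} {u : ℝ → ℝ}
    (hu : MemLp u 2 (volume.restrict (Ioc 0 T))) :
    ‖hu.toLp u‖ = locNorm T u := by
  have h1 : (inner ℝ (hu.toLp u) (hu.toLp u)) = ∫ t in Ioc (0:ℝ) T, u t * u t :=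
    inner_toLp_eq hu hu
  have h2 : (inner ℝ (hu.toLp u) (hu.toLp u)) = ‖hu.toLp u‖ ^ 2 :=
    real_inner_self_eq_norm_sq _
  have h3 : (∫ t in Ioc (0:ℝ) T, u t * u t) = ∫ t in Ioc (0:ℝ) T, u t ^ 2 := by
    refine integral_congr_ae (Filter.Eventually.of_forall fun t => ?_)
    ring
  have : locNorm T u = Real.sqrt (‖hu.toLp u‖ ^ 2) := by
    rw [locNorm, ← h3, ← h1, h2]
  rw [this, Real.sqrt_sq (norm_nonneg _)]

lemma pairing_eq_inner (p : TestIdx) (x : Lloc) :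
    pairing p x = (inner ℝ ((x.memL2 p.2.1).toLp x.1) (p.memL2.toLp p.1.2)) :=
  (inner_toLp_eq _ _).symm

lemma locNorm_nonneg (T : ℝ) (u : ℝ → ℝ) : 0 ≤ locNorm T u := Real.sqrt_nonneg _

lemma abs_pairing_le (p : TestIdx) (x : Lloc) :
    |pairing p x| ≤ locNorm p.1.1 x.1 * locNorm p.1.1 p.1.2 := by
  rw [pairing_eq_inner p x, ← norm_toLp_eq (x.memL2 p.2.1), ← norm_toLp_eq p.memL2]
  exact abs_real_inner_le_norm _ _

lemma locNorm_mono (x : Lloc) {S T : ℝ} (hS : 0 < S) (hST : S ≤ T) :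
    locNorm S x.1 ≤ locNorm T x.1 := by
  refine Real.sqrt_le_sqrt ?_
  refine setIntegral_mono_set (x.2.2 T (hS.trans_le hST))
    (Filter.Eventually.of_forall fun t => sq_nonneg _) ?_
  exact Filter.Eventually.of_forall (fun t ht => (Ioc_subset_Ioc_right hST) ht)

lemma continuous_pairing (p : TestIdx) : Continuous (pairing p) := by
  show @Continuous _ _
    (⨅ q : TestIdx, TopologicalSpace.induced (pairing q) inferInstance) _ (pairing p)
  exact continuous_iInf_dom continuous_induced_dom

lemma lloc_le_nhds {F : Filter Lloc} {x : Lloc}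
    (h : ∀ p : TestIdx, Tendsto (pairing p) F (𝓝 (pairing p x))) : F ≤ 𝓝 x := by
  show F ≤ @nhds Lloc (⨅ p : TestIdx, TopologicalSpace.induced (pairing p) inferInstance) x
  rw [_root_.nhds_iInf, le_iInf_iff]
  intro p
  rw [nhds_induced]
  exact (Filter.tendsto_iff_comap).mp (h p)

/-- Riesz representation for a bounded linear functional given pointwise. -/
lemma riesz_aux {α : Type*} [MeasurableSpace α] {μ : Measure α}
    (φ : Lp ℝ 2 μ → ℝ) (C : ℝ) (hC : 0 ≤ C)
    (hadd : ∀ f g, φ (f + g) = φ f + φ g)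
    (hsmul : ∀ (c : ℝ) f, φ (c • f) = c * φ f)
    (hbound : ∀ f, |φ f| ≤ C * ‖f‖) :
    ∃ g : Lp ℝ 2 μ, ‖g‖ ≤ C ∧ ∀ f, (inner ℝ g f) = φ f := by
  let L : Lp ℝ 2 μ →ₗ[ℝ] ℝ :=
    { toFun := φ
      map_add' := hadd
      map_smul' := hsmul }
  let Λ : Lp ℝ 2 μ →L[ℝ] ℝ := LinearMap.mkContinuous L C (fun f => by
    simpa [L, Real.norm_eq_abs] using hbound f)
  refine ⟨(InnerProductSpace.toDual ℝ (Lp ℝ 2 μ)).symm Λ, ?_, ?_⟩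
  · rw [LinearIsometryEquiv.norm_map]
    exact LinearMap.mkContinuous_norm_le L hC _
  · intro f
    exact InnerProductSpace.toDual_symm_apply

lemma tight_forward {Ω : Type*} [MeasurableSpace Ω] (P : Measure Ω)
    (X : ℕ → Ω → Lloc) (h : TightLaws P X) :
    ∀ T : ℝ, 0 < T → TightReal P (fun n ω => locNorm T (X n ω).1) := by
  intro T hT ε hε
  obtain ⟨K, hKc, hKb⟩ := h ε hε
  have key : ∃ C : ℝ, ∀ x ∈ K, locNorm T x.1 ≤ C := by
    let G : K → (Lp ℝ 2 (volume.restrict (Ioc (0:ℝ) T)) →L[ℝ] ℝ) :=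
      fun x => innerSL ℝ ((x.1.memL2 hT).toLp x.1.1)
    have hb : ∀ f, ∃ C, ∀ x : K, ‖G x f‖ ≤ C := by
      intro f
      have hfm : Measurable ⇑f := (Lp.stronglyMeasurable f).measurable
      have hfi : IntegrableOn (fun t => (f : ℝ → ℝ) t ^ 2) (Ioc 0 T) volume :=
        (memLp_two_iff_integrable_sq (Lp.aestronglyMeasurable f)).1 (Lp.memLp f)
      let p : TestIdx := ⟨(T, ⇑f), hT, hfm, hfi⟩
      obtain ⟨C, hC⟩ := hKc.exists_bound_of_continuousOn (continuous_pairing p).continuousOn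
      refine ⟨C, fun x => ?_⟩
      have hGf : G x f = pairing p x.1 := by
        show (inner ℝ ((x.1.memL2 hT).toLp x.1.1) f) = _
        conv_lhs => rw [← Lp.toLp_coeFn f (Lp.memLp f)]
        rw [inner_toLp_eq]
        rfl
      rw [Real.norm_eq_abs, hGf, ← Real.norm_eq_abs]
      exact hC x.1 x.2
    obtain ⟨C', hC'⟩ := banach_steinhaus hb
    refine ⟨C', fun x hx => ?_⟩
    have h1 := hC' ⟨x, hx⟩
    have h2 : ‖G ⟨x, hx⟩‖ = locNorm T x.1 := by
      show ‖innerSL ℝ _‖ = _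
      rw [innerSL_apply_norm, norm_toLp_eq]
    rwa [h2] at h1
  obtain ⟨C, hC⟩ := key
  refine ⟨C, fun n => ?_⟩
  refine le_trans (measure_mono ?_) (hKb n)
  intro ω hω
  simp only [mem_setOf_eq] at hω
  rw [abs_of_nonneg (locNorm_nonneg _ _)] at hω
  show X n ω ∈ Kᶜ
  intro hK
  exact absurd (hC _ hK) (not_le.mpr hω)

lemma memL2_indicator {T S : ℝ} {f : ℝ → ℝ} (hf : Measurable f)
    (hfi : IntegrableOn (fun t => f t ^ 2) (Ioc 0 T) volume) (hTS : T ≤ S) :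
    MemLp ((Ioc (0:ℝ) T).indicator f) 2 (volume.restrict (Ioc 0 S)) := by
  refine memL2_of (hf.indicator measurableSet_Ioc) ?_
  have heq : (fun t => ((Ioc (0:ℝ) T).indicator f t) ^ 2)
      = (Ioc (0:ℝ) T).indicator (fun t => f t ^ 2) := by
    funext t
    by_cases h : t ∈ Ioc (0:ℝ) T <;> simp [Set.indicator_apply, h]
  rw [heq]
  exact (hfi.integrable_indicator measurableSet_Ioc).integrableOn

lemma integral_mul_indicator {S T : ℝ} (hTS : T ≤ S) (u f : ℝ → ℝ) :
    ∫ t in Ioc (0:ℝ) S, u t * (Ioc (0:ℝ) T).indicator f t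
      = ∫ t in Ioc (0:ℝ) T, u t * f t := by
  have heq : (fun t => u t * (Ioc (0:ℝ) T).indicator f t)
      = (Ioc (0:ℝ) T).indicator (fun t => u t * f t) := by
    funext t; by_cases h : t ∈ Ioc (0:ℝ) T <;> simp [Set.indicator_apply, h]
  rw [heq, setIntegral_indicator measurableSet_Ioc,
    Set.inter_eq_right.mpr (Ioc_subset_Ioc_right hTS)]

/-- The test index attached to an element of `L²(0, k+1)`. -/
def pk (k : ℕ) (f : Lp ℝ 2 (volume.restrict (Ioc (0:ℝ) ((k:ℝ)+1)))) : TestIdx :=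
  ⟨(((k:ℝ)+1), ⇑f), by positivity, (Lp.stronglyMeasurable f).measurable,
    (memLp_two_iff_integrable_sq (Lp.aestronglyMeasurable f)).1 (Lp.memLp f)⟩

lemma pairing_pk (k : ℕ) (f : Lp ℝ 2 (volume.restrict (Ioc (0:ℝ) ((k:ℝ)+1)))) (x : Lloc) :
    pairing (pk k f) x = ∫ t in Ioc (0:ℝ) ((k:ℝ)+1), x.1 t * f t := rfl

/-- Reconstruction of an element of `L²_loc` from a consistent family of limits of pairings. -/
lemma exists_rep (M : ℕ → ℝ) (hM : ∀ k, 0 ≤ M k) (y : TestIdx → ℝ)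
    (hcomb : ∀ (p q r : TestIdx) (a b : ℝ),
      (∀ x : Lloc, pairing r x = a * pairing p x + b * pairing q x) →
        y r = a * y p + b * y q)
    (hbd : ∀ (p : TestIdx) (k : ℕ), p.1.1 ≤ (k:ℝ)+1 → |y p| ≤ M k * locNorm p.1.1 p.1.2) :
    ∃ z : Lloc, (∀ k : ℕ, locNorm ((k:ℝ)+1) z.1 ≤ M k) ∧
      ∀ p : TestIdx, pairing p z = y p := by
  -- a Riesz representative on each `[0, k+1]`
  have hpos : ∀ k : ℕ, (0:ℝ) < (k:ℝ)+1 := fun k => by positivity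
  have hg : ∀ k : ℕ, ∃ g : Lp ℝ 2 (volume.restrict (Ioc (0:ℝ) ((k:ℝ)+1))),
      ‖g‖ ≤ M k ∧ ∀ f, (inner ℝ g f) = y (pk k f) := by
    intro k
    refine riesz_aux (fun f => y (pk k f)) (M k) (hM k) ?_ ?_ ?_
    · intro f g
      show y (pk k (f + g)) = y (pk k f) + y (pk k g)
      have := hcomb (pk k f) (pk k g) (pk k (f + g)) 1 1 ?_
      · rw [this]; ring
      · intro x
        simp only [pairing_pk, one_mul]
        have h1 : ∫ t in Ioc (0:ℝ) ((k:ℝ)+1), x.1 t * (f + g) t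
            = ∫ t in Ioc (0:ℝ) ((k:ℝ)+1), (x.1 t * f t + x.1 t * g t) := by
          refine integral_congr_ae ?_
          filter_upwards [Lp.coeFn_add f g] with t ht
          rw [ht]; simp [mul_add]
        rw [h1]
        exact integral_add (integrable_mul_L2 (x.memL2 (hpos k)) (Lp.memLp f))
          (integrable_mul_L2 (x.memL2 (hpos k)) (Lp.memLp g))
    · intro c f
      show y (pk k (c • f)) = c * y (pk k f)
      have := hcomb (pk k f) (pk k f) (pk k (c • f)) c 0 ?_
      · rw [this]; ring
      · intro x
        simp only [pairing_pk]
        have h1 : ∫ t in Ioc (0:ℝ) ((k:ℝ)+1), x.1 t * (c • f) t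
            = ∫ t in Ioc (0:ℝ) ((k:ℝ)+1), c * (x.1 t * f t) := by
          refine integral_congr_ae ?_
          filter_upwards [Lp.coeFn_smul c f] with t ht
          rw [ht]; simp [smul_eq_mul]; ring
        rw [h1, integral_const_mul]
        ring
    · intro f
      have h1 := hbd (pk k f) k (le_refl _)
      have h2 : locNorm ((pk k f).1.1) ((pk k f).1.2) = ‖f‖ := by
        show locNorm ((k:ℝ)+1) ⇑f = _
        rw [← norm_toLp_eq (Lp.memLp f), Lp.toLp_coeFn]
      rwa [h2] at h1
  choose g hgnorm hginner using hg
  have hinner_int : ∀ (k : ℕ) (f : Lp ℝ 2 (volume.restrict (Ioc (0:ℝ) ((k:ℝ)+1)))),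
      (inner ℝ (g k) f) = ∫ t in Ioc (0:ℝ) ((k:ℝ)+1), (g k) t * f t := by
    intro k f
    rw [L2.inner_def]
    exact integral_congr_ae (Filter.Eventually.of_forall fun t => real_inner_mul _ _)
  -- consistency of the representatives
  have hcons : ∀ j k : ℕ, j ≤ k →
      (⇑(g j) : ℝ → ℝ) =ᵐ[volume.restrict (Ioc (0:ℝ) ((j:ℝ)+1))] ⇑(g k) := by
    intro j k hjk
    have hjk1 : ((j:ℝ)+1) ≤ ((k:ℝ)+1) := by
      have : (j:ℝ) ≤ (k:ℝ) := Nat.cast_le.mpr hjk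
      linarith
    have hrmem : MemLp (⇑(g k)) 2 (volume.restrict (Ioc (0:ℝ) ((j:ℝ)+1))) :=
      (Lp.memLp (g k)).mono_measure
        (Measure.restrict_mono (Ioc_subset_Ioc_right hjk1) le_rfl)
    have hmain : ∀ f : Lp ℝ 2 (volume.restrict (Ioc (0:ℝ) ((j:ℝ)+1))),
        (inner ℝ (g j) f) = (inner ℝ (hrmem.toLp _) f) := by
      intro f
      have hext : MemLp ((Ioc (0:ℝ) ((j:ℝ)+1)).indicator ⇑f) 2
          (volume.restrict (Ioc (0:ℝ) ((k:ℝ)+1))) :=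
        memL2_indicator (Lp.stronglyMeasurable f).measurable
          ((memLp_two_iff_integrable_sq (Lp.aestronglyMeasurable f)).1 (Lp.memLp f)) hjk1
      have hy : y (pk k (hext.toLp _)) = y (pk j f) := by
        have := hcomb (pk j f) (pk j f) (pk k (hext.toLp _)) 1 0 ?_
        · rw [this]; ring
        · intro x
          rw [pairing_pk, pairing_pk, one_mul, zero_mul, add_zero]
          have h1 : ∫ t in Ioc (0:ℝ) ((k:ℝ)+1), x.1 t * (hext.toLp _) t
              = ∫ t in Ioc (0:ℝ) ((k:ℝ)+1),
                  x.1 t * (Ioc (0:ℝ) ((j:ℝ)+1)).indicator ⇑f t := by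
            refine integral_congr_ae ?_
            filter_upwards [hext.coeFn_toLp] with t ht
            rw [ht]
          rw [h1, integral_mul_indicator hjk1]
      have h2 : (inner ℝ (g k) (hext.toLp _))
          = ∫ t in Ioc (0:ℝ) ((j:ℝ)+1), (g k) t * f t := by
        rw [hinner_int]
        have h3 : ∫ t in Ioc (0:ℝ) ((k:ℝ)+1), (g k) t * (hext.toLp _) t
            = ∫ t in Ioc (0:ℝ) ((k:ℝ)+1),
                (g k) t * (Ioc (0:ℝ) ((j:ℝ)+1)).indicator ⇑f t := by
          refine integral_congr_ae ?_
          filter_upwards [hext.coeFn_toLp] with t ht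
          rw [ht]
        rw [h3, integral_mul_indicator hjk1]
      have h4 : (inner ℝ (hrmem.toLp _) f)
          = ∫ t in Ioc (0:ℝ) ((j:ℝ)+1), (g k) t * f t := by
        rw [L2.inner_def]
        refine integral_congr_ae ?_
        filter_upwards [hrmem.coeFn_toLp] with t ht
        rw [ht, real_inner_mul]
      rw [hginner j f, ← hy, ← hginner k, h2, h4]
    have := ext_inner_right ℝ hmain
    rw [this]
    exact hrmem.coeFn_toLp
  -- the glued function
  set xfun : ℝ → ℝ := fun t => (g (⌈t⌉₊ - 1)) t with hxfun
  have hxm : Measurable xfun := by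
    have h1 : Measurable (fun q : ℝ × ℕ => (g q.2) q.1) :=
      measurable_from_prod_countable_left
        (fun k => (Lp.stronglyMeasurable (g k)).measurable)
    have h2 : Measurable (fun t : ℝ => (t, ⌈t⌉₊ - 1)) :=
      measurable_id.prodMk ((measurable_of_countable (fun n : ℕ => n - 1)).comp
        Nat.measurable_ceil)
    exact h1.comp h2
  -- xfun agrees a.e. with each representative
  have hae : ∀ k : ℕ, xfun =ᵐ[volume.restrict (Ioc (0:ℝ) ((k:ℝ)+1))] ⇑(g k) := by
    intro k
    have hAnull : ∀ j : ℕ, j ≤ k →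
        volume ({t | (g j) t ≠ (g k) t} ∩ Ioc (0:ℝ) ((j:ℝ)+1)) = 0 := by
      intro j hj
      have h1 := hcons j k hj
      rw [Filter.EventuallyEq, ae_iff] at h1
      rwa [Measure.restrict_apply] at h1
      exact (measurableSet_eq_fun (Lp.stronglyMeasurable (g j)).measurable
        (Lp.stronglyMeasurable (g k)).measurable).compl
    rw [Filter.EventuallyEq, ae_iff]
    have hmeas : MeasurableSet {t : ℝ | ¬ xfun t = (g k) t} :=
      (measurableSet_eq_fun hxm (Lp.stronglyMeasurable (g k)).measurable).compl
    rw [Measure.restrict_apply hmeas]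
    refine measure_mono_null ?_
      (measure_iUnion_null fun j => measure_iUnion_null fun hj : j ≤ k => hAnull j hj)
    rintro t ⟨htN, ht⟩
    have h0 : 0 < t := ht.1
    have hc1 : 1 ≤ ⌈t⌉₊ := Nat.one_le_ceil_iff.mpr h0
    set j := ⌈t⌉₊ - 1 with hjdef
    have hcj : ⌈t⌉₊ = j + 1 := (Nat.succ_pred_eq_of_pos hc1).symm
    have hjk : j ≤ k := by
      have hck : ⌈t⌉₊ ≤ k + 1 := Nat.ceil_le.mpr (by push_cast; linarith [ht.2])
      omega
    have htj : t ∈ Ioc (0:ℝ) ((j:ℝ)+1) := by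
      refine ⟨h0, ?_⟩
      have := Nat.le_ceil t
      rw [hcj] at this
      push_cast at this
      linarith
    refine mem_iUnion.mpr ⟨j, mem_iUnion.mpr ⟨hjk, ⟨?_, htj⟩⟩⟩
    exact fun hc => htN (by rw [hxfun]; exact hc)
  -- the glued function is in `L²_loc`
  have hxmem : LlocMem xfun := by
    refine ⟨hxm, fun T hT => ?_⟩
    set k : ℕ := ⌈T⌉₊ with hk
    have hTk : T ≤ (k:ℝ)+1 := by
      have := Nat.le_ceil T
      linarith
    have hint : IntegrableOn (fun t => (g k) t ^ 2) (Ioc (0:ℝ) ((k:ℝ)+1)) volume :=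
      (memLp_two_iff_integrable_sq (Lp.aestronglyMeasurable (g k))).1 (Lp.memLp (g k))
    have hint2 : IntegrableOn (fun t => (g k) t ^ 2) (Ioc (0:ℝ) T) volume :=
      hint.mono_set (Ioc_subset_Ioc_right hTk)
    refine hint2.congr ?_
    have haeT : xfun =ᵐ[volume.restrict (Ioc (0:ℝ) T)] ⇑(g k) :=
      ae_restrict_of_ae_restrict_of_subset (Ioc_subset_Ioc_right hTk) (hae k)
    filter_upwards [haeT] with t ht
    rw [ht]
  refine ⟨⟨xfun, hxmem⟩, ?_, ?_⟩
  · -- norm bounds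
    intro k
    have h1 : locNorm ((k:ℝ)+1) xfun = locNorm ((k:ℝ)+1) ⇑(g k) := by
      unfold locNorm
      congr 1
      refine integral_congr_ae ?_
      filter_upwards [hae k] with t ht
      rw [ht]
    rw [h1, ← norm_toLp_eq (Lp.memLp (g k)), Lp.toLp_coeFn]
    exact hgnorm k
  · -- pairings
    intro p
    set T := p.1.1 with hT
    set k : ℕ := ⌈T⌉₊ with hk
    have hTk : T ≤ (k:ℝ)+1 := by
      have := Nat.le_ceil T
      linarith
    have hext : MemLp ((Ioc (0:ℝ) T).indicator p.1.2) 2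
        (volume.restrict (Ioc (0:ℝ) ((k:ℝ)+1))) :=
      memL2_indicator p.2.2.1 p.2.2.2 hTk
    have hy : y (pk k (hext.toLp _)) = y p := by
      have := hcomb p p (pk k (hext.toLp _)) 1 0 ?_
      · rw [this]; ring
      · intro x
        rw [pairing_pk, one_mul, zero_mul, add_zero]
        have h1 : ∫ t in Ioc (0:ℝ) ((k:ℝ)+1), x.1 t * (hext.toLp _) t
            = ∫ t in Ioc (0:ℝ) ((k:ℝ)+1), x.1 t * (Ioc (0:ℝ) T).indicator p.1.2 t := by
          refine integral_congr_ae ?_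
          filter_upwards [hext.coeFn_toLp] with t ht
          rw [ht]
        rw [h1, integral_mul_indicator hTk]
        rfl
    have h2 : pairing p ⟨xfun, hxmem⟩ = (inner ℝ (g k) (hext.toLp _)) := by
      rw [hinner_int]
      have h3 : ∫ t in Ioc (0:ℝ) ((k:ℝ)+1), (g k) t * (hext.toLp _) t
          = ∫ t in Ioc (0:ℝ) ((k:ℝ)+1), (g k) t * (Ioc (0:ℝ) T).indicator p.1.2 t := by
        refine integral_congr_ae ?_
        filter_upwards [hext.coeFn_toLp] with t ht
        rw [ht]
      rw [h3, integral_mul_indicator hTk]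
      show (∫ t in Ioc (0:ℝ) T, xfun t * p.1.2 t) = _
      refine integral_congr_ae ?_
      have haeT : xfun =ᵐ[volume.restrict (Ioc (0:ℝ) T)] ⇑(g k) :=
        ae_restrict_of_ae_restrict_of_subset (Ioc_subset_Ioc_right hTk) (hae k)
      filter_upwards [haeT] with t ht
      rw [ht]
    rw [h2, hginner, hy]

/-- Closed balls (in all the seminorms) are compact in the `L²_w`-topology. -/
lemma isCompact_ball (M : ℕ → ℝ) (hM : ∀ k, 0 ≤ M k) :
    IsCompact {x : Lloc | ∀ k : ℕ, locNorm ((k : ℝ) + 1) x.1 ≤ M k} := by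
  set K := {x : Lloc | ∀ k : ℕ, locNorm ((k : ℝ) + 1) x.1 ≤ M k} with hKdef
  rw [isCompact_iff_ultrafilter_le_nhds]
  intro F hF
  have hKF : K ∈ F := le_principal_iff.mp hF
  have hbdK : ∀ (p : TestIdx) (k : ℕ), p.1.1 ≤ (k:ℝ)+1 → ∀ x ∈ K,
      |pairing p x| ≤ M k * locNorm p.1.1 p.1.2 := by
    intro p k hpk x hx
    refine (abs_pairing_le p x).trans ?_
    refine mul_le_mul_of_nonneg_right ?_ (locNorm_nonneg _ _)
    exact (locNorm_mono x p.2.1 hpk).trans (hx k)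
  have hy : ∀ p : TestIdx, ∃ c : ℝ, Tendsto (pairing p) (F : Filter Lloc) (𝓝 c) := by
    intro p
    set k : ℕ := ⌈p.1.1⌉₊ with hk
    have hTk : p.1.1 ≤ (k:ℝ)+1 := by
      have := Nat.le_ceil p.1.1
      linarith
    set B : ℝ := M k * locNorm p.1.1 p.1.2 with hB
    have hmap : ↑(F.map (pairing p)) ≤ 𝓟 (Icc (-B) B) := by
      rw [Ultrafilter.coe_map, le_principal_iff, mem_map]
      refine mem_of_superset hKF ?_
      intro x hx
      have := hbdK p k hTk x hx
      rw [abs_le] at this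
      exact this
    obtain ⟨c, -, hc⟩ := isCompact_Icc.ultrafilter_le_nhds (F.map (pairing p)) hmap
    exact ⟨c, by rwa [Ultrafilter.coe_map] at hc⟩
  choose y ty using hy
  have hcomb : ∀ (p q r : TestIdx) (a b : ℝ),
      (∀ x : Lloc, pairing r x = a * pairing p x + b * pairing q x) →
        y r = a * y p + b * y q := by
    intro p q r a b hpqr
    refine tendsto_nhds_unique (ty r) ?_
    have : Tendsto (fun x => a * pairing p x + b * pairing q x) (F : Filter Lloc)
        (𝓝 (a * y p + b * y q)) :=
      (((ty p).const_mul a).add ((ty q).const_mul b))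
    exact this.congr fun x => (hpqr x).symm
  have hbd : ∀ (p : TestIdx) (k : ℕ), p.1.1 ≤ (k:ℝ)+1 →
      |y p| ≤ M k * locNorm p.1.1 p.1.2 := by
    intro p k hpk
    have habs : Tendsto (fun x => |pairing p x|) (F : Filter Lloc) (𝓝 |y p|) :=
      (ty p).abs
    refine le_of_tendsto habs ?_
    exact Filter.mem_of_superset hKF fun x hx => hbdK p k hpk x hx
  obtain ⟨z, hzK, hzy⟩ := exists_rep M hM y hcomb hbd
  refine ⟨z, hzK, lloc_le_nhds fun p => ?_⟩
  rw [hzy p]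
  exact ty p

end Aux

/-- Lemma `L2tightness`. A sequence of `L²_loc`-valued processes `X_n` is
tight for the `L²_w`-topology if and only if, for each `T > 0`, the sequence of real random
variables `(|X_n|_T)` is tight. -/
theorem stmt_0 {Ω : Type*} [MeasurableSpace Ω] (P : Measure Ω) [IsProbabilityMeasure P]
    (X : ℕ → Ω → Lloc) (hX : ∀ n, Measurable (X n)) :
    TightLaws P X ↔ ∀ T : ℝ, 0 < T → TightReal P (fun n ω => locNorm T (X n ω).1) := by
  constructor
  · exact fun h => tight_forward P X h
  · intro h ε hε
    have hMex : ∀ k : ℕ, ∃ Mk : ℝ, 0 ≤ Mk ∧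
        ∀ n, P {ω | Mk < locNorm ((k:ℝ)+1) (X n ω).1} ≤ ε / 2 ^ (k+1) := by
      intro k
      obtain ⟨M0, hM0⟩ := h ((k:ℝ)+1) (by positivity) (ε / 2 ^ (k+1))
        (ENNReal.div_pos hε.ne' (ENNReal.pow_ne_top ENNReal.ofNat_ne_top))
      refine ⟨max M0 0, le_max_right _ _, fun n => le_trans (measure_mono ?_) (hM0 n)⟩
      intro ω hω
      simp only [mem_setOf_eq] at hω ⊢
      rw [abs_of_nonneg (locNorm_nonneg _ _)]
      exact lt_of_le_of_lt (le_max_left _ _) hω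
    choose M hM0 hMb using hMex
    refine ⟨_, isCompact_ball M hM0, fun n => ?_⟩
    have hsub : (X n) ⁻¹' ({x : Lloc | ∀ k : ℕ, locNorm ((k:ℝ)+1) x.1 ≤ M k})ᶜ
        ⊆ ⋃ k : ℕ, {ω | M k < locNorm ((k:ℝ)+1) (X n ω).1} := by
      intro ω hω
      simp only [mem_preimage, mem_compl_iff, mem_setOf_eq, not_forall, not_le] at hω
      obtain ⟨k, hk⟩ := hω
      exact mem_iUnion.mpr ⟨k, hk⟩
    refine le_trans (measure_mono hsub) (le_trans (measure_iUnion_le _) ?_)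
    refine le_trans (ENNReal.tsum_le_tsum fun k => hMb k n) (le_of_eq ?_)
    have h1 : ∀ k : ℕ, ε / 2 ^ (k+1) = ε * (2⁻¹ : ℝ≥0∞) ^ (k+1) := by
      intro k
      rw [div_eq_mul_inv, ENNReal.inv_pow]
    calc ∑' k : ℕ, ε / 2 ^ (k+1) = ∑' k : ℕ, ε * (2⁻¹ : ℝ≥0∞) ^ (k+1) := by
          refine tsum_congr h1
      _ = ε * ∑' k : ℕ, (2⁻¹ : ℝ≥0∞) ^ (k+1) := ENNReal.tsum_mul_left
      _ = ε * ∑' k : ℕ, (2⁻¹ : ℝ≥0∞) * (2⁻¹ : ℝ≥0∞) ^ k := by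
          congr 1
          refine tsum_congr fun k => ?_
          rw [pow_succ, mul_comm]
      _ = ε * ((2⁻¹ : ℝ≥0∞) * ∑' k : ℕ, (2⁻¹ : ℝ≥0∞) ^ k) := by rw [ENNReal.tsum_mul_left]
      _ = ε * ((2⁻¹ : ℝ≥0∞) * (1 - 2⁻¹)⁻¹) := by rw [ENNReal.tsum_geometric]
      _ = ε := by
          rw [ENNReal.one_sub_inv_two, inv_inv,
            ENNReal.inv_mul_cancel (by norm_num) ENNReal.ofNat_ne_top, mul_one]
end RV
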